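/- Let f : 𝔽₂ⁿ → {0,1} be a nonzero boolean function. If f is not the indicator function of a coset of a subgroup, then ‖f‖_A ≥ 3/2. -/
import Mathlib


open scoped Classical
open Finset

noncomputable def ft {n : ℕ} (f : (Fin n → ZMod 2) → ℝ) (r : Fin n → ZMod 2) : ℝ :=
  (∑ x : Fin n → ZMod 2, f x * (-1 : ℝ) ^ (∑ i, r i * x i).val) /
    (Fintype.card (Fin n → ZMod 2))

noncomputable def aNorm {n : ℕ} (f : (Fin n → ZMod 2) → ℝ) : ℝ := ∑ r : Fin n → ZMod 2, |ft f r|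

lemma zmod2_cases : ∀ c : ZMod 2, c = 0 ∨ c = 1 := by decide

lemma sum_zmod2 (g : ZMod 2 → ℝ) : ∑ c : ZMod 2, g c = g 0 + g 1 := by
  rw [show (Finset.univ : Finset (ZMod 2)) = {0, 1} by decide]
  rw [Finset.sum_insert (by decide), Finset.sum_singleton]

lemma chi_add (a b : ZMod 2) : ((-1:ℝ))^(a+b).val = (-1)^a.val * (-1)^b.val := by
  rcases zmod2_cases a with h | h <;> rcases zmod2_cases b with h' | h' <;>
    subst h <;> subst h' <;>
    norm_num [show ZMod.val (2 : ZMod 2) = 0 from rfl, ZMod.val_zero, ZMod.val_one]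

lemma chi_sum {ι : Type*} (s : Finset ι) (g : ι → ZMod 2) :
    (-1:ℝ)^(∑ i ∈ s, g i).val = ∏ i ∈ s, (-1:ℝ)^(g i).val := by
  induction s using Finset.cons_induction with
  | empty => simp
  | cons a s ha ih => rw [Finset.sum_cons, Finset.prod_cons, chi_add, ih]

lemma sum_chi {n : ℕ} (z : Fin n → ZMod 2) :
    ∑ r : Fin n → ZMod 2, (-1:ℝ)^(∑ i, r i * z i).val
      = if z = 0 then (2:ℝ)^n else 0 := by
  have h1 : ∀ r : Fin n → ZMod 2, (-1:ℝ)^(∑ i, r i * z i).val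
      = ∏ i, (-1:ℝ)^(r i * z i).val := fun r => chi_sum _ _
  simp_rw [h1]
  rw [← Fintype.prod_sum (fun i (c : ZMod 2) => (-1:ℝ)^(c * z i).val)]
  have h2 : ∀ i, (∑ c : ZMod 2, (-1:ℝ)^(c * z i).val)
      = if z i = 0 then (2:ℝ) else 0 := by
    intro i
    rw [sum_zmod2]
    rcases zmod2_cases (z i) with h | h <;> rw [h] <;>
      norm_num [ZMod.val_zero, ZMod.val_one]
  simp_rw [h2]
  by_cases hz : z = 0
  · simp [hz]
  · rw [if_neg hz]
    obtain ⟨i, hi⟩ : ∃ i, z i ≠ 0 := by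
      by_contra h; push_neg at h; exact hz (funext h)
    exact Finset.prod_eq_zero (Finset.mem_univ i) (by simp [hi])

lemma fourier_inversion {n : ℕ} (f : (Fin n → ZMod 2) → ℝ) (x : Fin n → ZMod 2) :
    f x = ∑ r : Fin n → ZMod 2, ft f r * (-1:ℝ)^(∑ i, r i * x i).val := by
  unfold ft
  simp_rw [div_mul_eq_mul_div, Finset.sum_mul, Finset.sum_div]
  rw [Finset.sum_comm]
  have key : ∀ y : Fin n → ZMod 2,
      ∑ r : Fin n → ZMod 2,
        f y * (-1:ℝ)^(∑ i, r i * y i).val * (-1:ℝ)^(∑ i, r i * x i).val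
      = f y * (if y = x then (2:ℝ)^n else 0) := by
    intro y
    have hc : ∀ r : Fin n → ZMod 2,
        (-1:ℝ)^(∑ i, r i * y i).val * (-1:ℝ)^(∑ i, r i * x i).val
        = (-1:ℝ)^(∑ i, r i * (y i + x i)).val := by
      intro r
      rw [show (∑ i, r i * (y i + x i)) = (∑ i, r i * y i) + (∑ i, r i * x i) by
        rw [← Finset.sum_add_distrib]; congr 1; ext i; ring, chi_add]
    simp_rw [mul_assoc, hc, ← Finset.mul_sum]
    congr 1
    rw [sum_chi (fun i => y i + x i)]
    congr 1
    simp only [eq_iff_iff]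
    constructor
    · intro h
      funext i
      have hz := congrFun h i
      simp only [Pi.zero_apply] at hz
      have h2 : y i + x i + x i = x i := by rw [hz]; simp
      rwa [add_assoc, CharTwo.add_self_eq_zero, add_zero] at h2
    · intro h; subst h; funext i
      simp [CharTwo.add_self_eq_zero]
  have key2 : ∀ y : Fin n → ZMod 2,
      ∑ r : Fin n → ZMod 2,
        f y * (-1:ℝ)^(∑ i, r i * y i).val * (-1:ℝ)^(∑ i, r i * x i).val
          / (Fintype.card (Fin n → ZMod 2) : ℝ)
      = (f y * (if y = x then (2:ℝ)^n else 0)) / (Fintype.card (Fin n → ZMod 2) : ℝ) := by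
    intro y
    rw [← Finset.sum_div, key y]
  simp_rw [key2]
  have hpush : ∀ y : Fin n → ZMod 2,
      (f y * if y = x then (2:ℝ)^n else 0) / (Fintype.card (Fin n → ZMod 2) : ℝ)
      = if y = x then f y * (2:ℝ)^n / (Fintype.card (Fin n → ZMod 2) : ℝ) else 0 := by
    intro y; split <;> simp
  simp_rw [hpush]
  rw [Finset.sum_ite_eq' Finset.univ x
    (fun y => f y * (2:ℝ)^n / (Fintype.card (Fin n → ZMod 2) : ℝ))]
  simp only [Finset.mem_univ, if_true, Fintype.card_fun, Fintype.card_fin, ZMod.card]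
  have h2n : ((2:ℝ))^n ≠ 0 := by positivity
  rw [Nat.cast_pow]
  push_cast
  field_simp

lemma chi_pm {n : ℕ} (r v : Fin n → ZMod 2) :
    (-1:ℝ)^(∑ i, r i * v i).val = 1 ∨ (-1:ℝ)^(∑ i, r i * v i).val = -1 := by
  rcases Nat.even_or_odd ((∑ i, r i * v i).val) with h | h
  · left; exact Even.neg_one_pow h
  · right; exact Odd.neg_one_pow h

lemma triple_closed {n : ℕ} (f : (Fin n → ZMod 2) → ℝ)
    (hbool : ∀ x, f x = 0 ∨ f x = 1) (hA : aNorm f < 3/2)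
    {x y z : Fin n → ZMod 2} (hx : f x = 1) (hy : f y = 1) (hz : f z = 1) :
    f (x + y + z) = 1 := by
  by_contra hw
  have hw0 : f (x + y + z) = 0 := (hbool _).resolve_right hw
  have hmul : ∀ r : Fin n → ZMod 2, (-1:ℝ)^(∑ i, r i * (x i + y i + z i)).val
      = (-1:ℝ)^(∑ i, r i * x i).val * (-1:ℝ)^(∑ i, r i * y i).val *
        (-1:ℝ)^(∑ i, r i * z i).val := by
    intro r
    rw [show (∑ i, r i * (x i + y i + z i))
        = ((∑ i, r i * x i) + (∑ i, r i * y i)) + (∑ i, r i * z i) by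
      rw [← Finset.sum_add_distrib, ← Finset.sum_add_distrib]
      congr 1; ext i; ring, chi_add, chi_add]
  have key : (3:ℝ) = ∑ r : Fin n → ZMod 2, ft f r *
      ((-1:ℝ)^(∑ i, r i * x i).val + (-1:ℝ)^(∑ i, r i * y i).val +
       (-1:ℝ)^(∑ i, r i * z i).val -
       (-1:ℝ)^(∑ i, r i * x i).val * (-1:ℝ)^(∑ i, r i * y i).val *
       (-1:ℝ)^(∑ i, r i * z i).val) := by
    have e1 := fourier_inversion f x
    have e2 := fourier_inversion f y
    have e3 := fourier_inversion f z
    have e4 := fourier_inversion f (x + y + z)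
    simp only [Pi.add_apply] at e4
    simp_rw [hmul] at e4
    have h3 : (3:ℝ) = f x + f y + f z - f (x + y + z) := by
      rw [hx, hy, hz, hw0]; norm_num
    rw [h3, e1, e2, e3, e4, ← Finset.sum_add_distrib, ← Finset.sum_add_distrib,
      ← Finset.sum_sub_distrib]
    congr 1; funext r; ring
  have bound : (3:ℝ) ≤ 2 * aNorm f := by
    have habs : |(3:ℝ)| ≤ ∑ r : Fin n → ZMod 2, |ft f r| * 2 := by
      rw [key]
      refine le_trans (Finset.abs_sum_le_sum_abs _ _) (Finset.sum_le_sum ?_)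
      intro r _
      rw [abs_mul]
      apply mul_le_mul_of_nonneg_left _ (abs_nonneg _)
      rcases chi_pm r x with h1 | h1 <;> rcases chi_pm r y with h2 | h2 <;>
        rcases chi_pm r z with h3 | h3 <;> rw [h1, h2, h3] <;> norm_num
    rw [abs_of_nonneg (by norm_num : (0:ℝ) ≤ 3)] at habs
    calc (3:ℝ) ≤ ∑ r : Fin n → ZMod 2, |ft f r| * 2 := habs
      _ = 2 * aNorm f := by
          rw [aNorm, Finset.mul_sum]
          exact Finset.sum_congr rfl fun r _ => mul_comm _ _
  linarith

theorem spectral_norm_ge_three_halves {n : ℕ} (f : (Fin n → ZMod 2) → ℝ)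
    (hbool : ∀ x, f x = 0 ∨ f x = 1) (hne : ∃ x, f x = 1)
    (hnc : ¬ ∃ (t : Fin n → ZMod 2) (H : Submodule (ZMod 2) (Fin n → ZMod 2)),
      ∀ x, f x = if x - t ∈ H then (1 : ℝ) else 0) :
    (3 : ℝ) / 2 ≤ aNorm f := by
  by_contra hA
  push_neg at hA
  obtain ⟨t, ht⟩ := hne
  apply hnc
  have htt : t + t = 0 := funext fun i => CharTwo.add_self_eq_zero (t i)
  have hcl : ∀ a b : Fin n → ZMod 2, f (a + t) = 1 → f (b + t) = 1 →
      f (a + b + t) = 1 := by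
    intro a b ha hb
    have h3 := triple_closed f hbool hA ha hb ht
    have e : a + t + (b + t) + t = a + b + t := by
      calc a + t + (b + t) + t = a + b + t + (t + t) := by abel
        _ = a + b + t := by rw [htt, add_zero]
    rwa [e] at h3
  let H : Submodule (ZMod 2) (Fin n → ZMod 2) :=
    { carrier := {x | f (x + t) = 1}
      add_mem' := fun {a b} ha hb => hcl a b ha hb
      zero_mem' := by simpa using ht
      smul_mem' := by
        intro c a ha
        rcases zmod2_cases c with h | h <;> subst h
        · simpa using ht
        · simpa using ha }
  refine ⟨t, H, fun x => ?_⟩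
  have hxt : x - t + t = x := by abel
  have hmemH : x - t ∈ H ↔ f x = 1 := by
    rw [show (x - t ∈ H) ↔ f (x - t + t) = 1 from Iff.rfl, hxt]
  by_cases hx : f x = 1
  · rw [if_pos (hmemH.mpr hx), hx]
  · rw [if_neg (fun h => hx (hmemH.mp h))]
    exact (hbool x).resolve_right hx
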